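/- Let a ≠ 0, h ∈ ℝ, and H(x,y) = y²/2 + x²/2 − (2/3)x³ + (a/4)x⁴. Let ℓ be a linear functional on polynomial 1-forms P(x,y)dx + Q(x,y)dy satisfying: (i) ℓ(dF) = 0 for every polynomial F (i.e. ℓ(F_x dx + F_y dy) = 0), and (ii) ℓ(H·ω) = h·ℓ(ω) for every polynomial 1-form ω. Then ℓ(y³ dx) = (12/7)h·ℓ(y dx) − (2/(7a))·ℓ(x y dx) + (4/(7a) − 3/7)·ℓ(x² y dx). -/

import Mathlib

open MvPolynomial

/-- A polynomial 1-form `P dx + Q dy` is a pair of real bivariate polynomials. -/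
abbrev OneForm : Type := MvPolynomial (Fin 2) ℝ × MvPolynomial (Fin 2) ℝ

/-- The quartic Hamiltonian `H = y²/2 + x²/2 − (2/3)x³ + (a/4)x⁴`. -/
noncomputable def Hpoly (a : ℝ) : MvPolynomial (Fin 2) ℝ :=
  C (1/2 : ℝ) * (X 1)^2 + C (1/2 : ℝ) * (X 0)^2 - C (2/3 : ℝ) * (X 0)^3 + C (a/4) * (X 0)^4

set_option maxHeartbeats 1000000 in
theorem stmt_2 (a : ℝ) (ha : a ≠ 0) (h : ℝ)
    (ℓ : OneForm →ₗ[ℝ] ℝ)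
    (hexact : ∀ F : MvPolynomial (Fin 2) ℝ, ℓ (pderiv 0 F, pderiv 1 F) = 0)
    (hmul : ∀ ω : OneForm, ℓ (Hpoly a * ω.1, Hpoly a * ω.2) = h * ℓ ω) :
    ℓ ((X 1)^3, 0)
      = (12/7) * h * ℓ (X 1, 0)
        - (2/(7*a)) * ℓ (X 0 * X 1, 0)
        + (4/(7*a) - 3/7) * ℓ ((X 0)^2 * X 1, 0) := by
  have ex0 : ℓ (0, 1) = 0 := by
    have e := hexact (X 1)
    rw [show ((pderiv 0 (X 1), pderiv 1 (X 1)) : OneForm) = (0, 1) by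
      refine Prod.ext ?_ ?_ <;> simp] at e
    exact e
  have ex1 : ℓ (X 1, 0) + ℓ (0, X 0) = 0 := by
    have e := hexact (X 0 * X 1)
    rw [show ((pderiv 0 (X 0 * X 1), pderiv 1 (X 0 * X 1)) : OneForm)
        = ((X 1, 0) : OneForm) + (0, X 0) by
      refine Prod.ext ?_ ?_ <;> simp [pderiv_mul]] at e
    simp only [map_add, map_smul, smul_eq_mul] at e
    linarith [e]
  have ex2 : 2 * ℓ (X 0 * X 1, 0) + ℓ (0, (X 0)^2) = 0 := by
    have e := hexact ((X 0)^2 * X 1)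
    rw [show ((pderiv 0 ((X 0)^2 * X 1), pderiv 1 ((X 0)^2 * X 1)) : OneForm)
        = (2:ℝ) • ((X 0 * X 1, 0) : OneForm) + (0, (X 0)^2) by
      refine Prod.ext ?_ ?_ <;>
        simp [pderiv_mul, pderiv_pow, smul_eq_C_mul, map_ofNat] <;> ring] at e
    simp only [map_add, map_smul, smul_eq_mul] at e
    linarith [e]
  have ex3 : 3 * ℓ ((X 0)^2 * X 1, 0) + ℓ (0, (X 0)^3) = 0 := by
    have e := hexact ((X 0)^3 * X 1)
    rw [show ((pderiv 0 ((X 0)^3 * X 1), pderiv 1 ((X 0)^3 * X 1)) : OneForm)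
        = (3:ℝ) • (((X 0)^2 * X 1, 0) : OneForm) + (0, (X 0)^3) by
      refine Prod.ext ?_ ?_ <;>
        simp [pderiv_mul, pderiv_pow, smul_eq_C_mul, map_ofNat] <;> ring] at e
    simp only [map_add, map_smul, smul_eq_mul] at e
    linarith [e]
  have ex4 : 4 * ℓ ((X 0)^3 * X 1, 0) + ℓ (0, (X 0)^4) = 0 := by
    have e := hexact ((X 0)^4 * X 1)
    rw [show ((pderiv 0 ((X 0)^4 * X 1), pderiv 1 ((X 0)^4 * X 1)) : OneForm)
        = (4:ℝ) • (((X 0)^3 * X 1, 0) : OneForm) + (0, (X 0)^4) by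
      refine Prod.ext ?_ ?_ <;>
        simp [pderiv_mul, pderiv_pow, smul_eq_C_mul, map_ofNat] <;> ring] at e
    simp only [map_add, map_smul, smul_eq_mul] at e
    linarith [e]
  have ex5 : 5 * ℓ ((X 0)^4 * X 1, 0) + ℓ (0, (X 0)^5) = 0 := by
    have e := hexact ((X 0)^5 * X 1)
    rw [show ((pderiv 0 ((X 0)^5 * X 1), pderiv 1 ((X 0)^5 * X 1)) : OneForm)
        = (5:ℝ) • (((X 0)^4 * X 1, 0) : OneForm) + (0, (X 0)^5) by
      refine Prod.ext ?_ ?_ <;>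
        simp [pderiv_mul, pderiv_pow, smul_eq_C_mul, map_ofNat] <;> ring] at e
    simp only [map_add, map_smul, smul_eq_mul] at e
    linarith [e]
  have ex6 : 3 * ℓ (0, (X 1)^2) = 0 := by
    have e := hexact ((X 1)^3)
    rw [show ((pderiv 0 ((X 1)^3), pderiv 1 ((X 1)^3)) : OneForm)
        = (3:ℝ) • ((0, (X 1)^2) : OneForm) by
      refine Prod.ext ?_ ?_ <;>
        simp [pderiv_pow, smul_eq_C_mul, map_ofNat] <;> ring] at e
    simp only [map_add, map_smul, smul_eq_mul] at e
    linarith [e]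
  have ex7 : ℓ ((X 1)^3, 0) + 3 * ℓ (0, X 0 * (X 1)^2) = 0 := by
    have e := hexact (X 0 * (X 1)^3)
    rw [show ((pderiv 0 (X 0 * (X 1)^3), pderiv 1 (X 0 * (X 1)^3)) : OneForm)
        = (((X 1)^3, 0) : OneForm) + (3:ℝ) • ((0, X 0 * (X 1)^2) : OneForm) by
      refine Prod.ext ?_ ?_ <;>
        simp [pderiv_mul, pderiv_pow, smul_eq_C_mul, map_ofNat] <;> ring] at e
    simp only [map_add, map_smul, smul_eq_mul] at e
    linarith [e]
  have m1 : (1/2) * ℓ ((X 1)^3, 0) + (1/2) * ℓ ((X 0)^2 * X 1, 0)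
      - (2/3) * ℓ ((X 0)^3 * X 1, 0) + (a/4) * ℓ ((X 0)^4 * X 1, 0)
      = h * ℓ (X 1, 0) := by
    have e := hmul (X 1, 0)
    rw [show ((Hpoly a * X 1, Hpoly a * 0) : OneForm)
        = (1/2 : ℝ) • (((X 1)^3, 0) : OneForm) + (1/2 : ℝ) • (((X 0)^2 * X 1, 0) : OneForm)
          - (2/3 : ℝ) • (((X 0)^3 * X 1, 0) : OneForm)
          + (a/4 : ℝ) • (((X 0)^4 * X 1, 0) : OneForm) by
      refine Prod.ext ?_ ?_ <;> simp [Hpoly, smul_eq_C_mul] <;> ring] at e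
    simp only [map_add, map_sub, map_smul, smul_eq_mul] at e
    linarith [e]
  have m2 : (1/2) * ℓ (0, (X 1)^2) + (1/2) * ℓ (0, (X 0)^2)
      - (2/3) * ℓ (0, (X 0)^3) + (a/4) * ℓ (0, (X 0)^4)
      = h * ℓ (0, 1) := by
    have e := hmul (0, 1)
    rw [show ((Hpoly a * 0, Hpoly a * 1) : OneForm)
        = (1/2 : ℝ) • ((0, (X 1)^2) : OneForm) + (1/2 : ℝ) • ((0, (X 0)^2) : OneForm)
          - (2/3 : ℝ) • ((0, (X 0)^3) : OneForm)
          + (a/4 : ℝ) • ((0, (X 0)^4) : OneForm) by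
      refine Prod.ext ?_ ?_ <;> simp [Hpoly, smul_eq_C_mul] <;> ring] at e
    simp only [map_add, map_sub, map_smul, smul_eq_mul] at e
    linarith [e]
  have m3 : (1/2) * ℓ (0, X 0 * (X 1)^2) + (1/2) * ℓ (0, (X 0)^3)
      - (2/3) * ℓ (0, (X 0)^4) + (a/4) * ℓ (0, (X 0)^5)
      = h * ℓ (0, X 0) := by
    have e := hmul (0, X 0)
    rw [show ((Hpoly a * 0, Hpoly a * X 0) : OneForm)
        = (1/2 : ℝ) • ((0, X 0 * (X 1)^2) : OneForm) + (1/2 : ℝ) • ((0, (X 0)^3) : OneForm)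
          - (2/3 : ℝ) • ((0, (X 0)^4) : OneForm)
          + (a/4 : ℝ) • ((0, (X 0)^5) : OneForm) by
      refine Prod.ext ?_ ?_ <;> simp [Hpoly, smul_eq_C_mul] <;> ring] at e
    simp only [map_add, map_sub, map_smul, smul_eq_mul] at e
    linarith [e]
  have key : 7 * a * ℓ ((X 1)^3, 0)
      = 12 * a * h * ℓ (X 1, 0) - 2 * ℓ (X 0 * X 1, 0)
        + (4 - 3 * a) * ℓ ((X 0)^2 * X 1, 0) := by
    linear_combination (-2*h) * ex0 + (3*a*h) * ex1 + ex2 + (-4/3 - 3*a/2) * ex3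
      + (5*a/2) * ex4 + (-3*a^2/4) * ex5 + (1/3) * ex6 + (-a/2) * ex7
      + (15*a) * m1 + (-2) * m2 + (3*a) * m3
  field_simp
  linear_combination key
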